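/- Let k ≥ 1 and let b₁,…,b_k > 0, ε₁,…,ε_k > 0, a ∈ ℝ. Suppose |ζ_{n₁,…,n_k}| < exp(a + ∑ b_i n_i). Then the multi-series ∑_{n₁,…,n_k} ζ_{n₁…n_k} ∏_{i=1}^k f_{n_i}(z_i) converges uniformly on every polydisk {|z_i| < ρ, 1 ≤ i ≤ k}, with each term bounded in modulus by exp(a + ρ∑_i(4π+b_i+ε_i)) · exp(−∑_i ε_i n_i). -/

import Mathlib

open Real Finset

/-- The interpolation kernel `f_n` with the removable singularity at `z = n` filled in by 1. -/
noncomputable def fTerm (b ε : ℝ) (n : ℕ) (z : ℂ) : ℂ :=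
  if z = (n : ℂ) then 1 else
    Complex.exp ((z - n) * (2 * Real.pi + b + ε)) *
      Complex.sin (2 * Real.pi * (z - n)) / (2 * Real.pi * (z - n))

lemma norm_sin_le_sinh (w : ℂ) : ‖Complex.sin w‖ ≤ Real.sinh ‖w‖ := by
  have h := Complex.hasSum_sin w
  have hs := Real.hasSum_sinh ‖w‖
  have hnorm : ∀ n : ℕ, ‖(-1 : ℂ) ^ n * w ^ (2 * n + 1) / ((2 * n + 1).factorial : ℂ)‖
      = ‖w‖ ^ (2 * n + 1) / ((2 * n + 1).factorial : ℝ) := by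
    intro n
    simp [norm_div, norm_mul, norm_pow]
  have hsum : Summable fun n : ℕ => ‖(-1 : ℂ) ^ n * w ^ (2 * n + 1) / ((2 * n + 1).factorial : ℂ)‖ := by
    simpa only [hnorm] using hs.summable
  calc ‖Complex.sin w‖ = ‖∑' n : ℕ, (-1 : ℂ) ^ n * w ^ (2 * n + 1) / ((2 * n + 1).factorial : ℂ)‖ := by
        rw [h.tsum_eq]
    _ ≤ ∑' n : ℕ, ‖(-1 : ℂ) ^ n * w ^ (2 * n + 1) / ((2 * n + 1).factorial : ℂ)‖ :=
        norm_tsum_le_tsum_norm hsum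
    _ = Real.sinh ‖w‖ := by
        rw [show (fun n : ℕ => ‖(-1 : ℂ) ^ n * w ^ (2 * n + 1) / ((2 * n + 1).factorial : ℂ)‖)
            = fun n : ℕ => ‖w‖ ^ (2 * n + 1) / ((2 * n + 1).factorial : ℝ) from funext hnorm]
        exact hs.tsum_eq

lemma sinh_le_mul_exp {x : ℝ} (hx : 0 ≤ x) : Real.sinh x ≤ x * Real.exp x := by
  rw [Real.sinh_eq]
  have h1 := Real.add_one_le_exp (-(2 * x))
  have h5 : Real.exp (-x) = Real.exp (-(2 * x)) * Real.exp x := by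
    rw [← Real.exp_add]; ring_nf
  nlinarith [Real.exp_pos x, h1, h5]

lemma norm_sin_div_le (u : ℂ) (hu : u ≠ 0) : ‖Complex.sin u / u‖ ≤ Real.exp ‖u‖ := by
  rw [norm_div, div_le_iff₀ (norm_pos_iff.mpr hu)]
  calc ‖Complex.sin u‖ ≤ Real.sinh ‖u‖ := norm_sin_le_sinh u
    _ ≤ ‖u‖ * Real.exp ‖u‖ := sinh_le_mul_exp (norm_nonneg u)
    _ = Real.exp ‖u‖ * ‖u‖ := mul_comm _ _

lemma fTerm_bound {b ε ρ : ℝ} (hb : 0 < b) (hε : 0 < ε) (hρ : 0 < ρ) (n : ℕ) (z : ℂ)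
    (hz : ‖z‖ < ρ) :
    ‖fTerm b ε n z‖ ≤ Real.exp (ρ * (4 * Real.pi + b + ε) - (b + ε) * n) := by
  have hπ := Real.pi_pos
  rw [fTerm]
  by_cases h : z = (n : ℂ)
  · rw [if_pos h]
    have hn : (n : ℝ) < ρ := by
      have : ‖(n : ℂ)‖ = (n : ℝ) := by
        simp
      rw [← this, ← h]; exact hz
    rw [norm_one]
    rw [Real.one_le_exp_iff]
    nlinarith
  · rw [if_neg h]
    have hw : z - (n : ℂ) ≠ 0 := sub_ne_zero.mpr h
    have hu : (2 * (Real.pi : ℂ)) * (z - n) ≠ 0 := by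
      apply mul_ne_zero _ hw
      simp [Real.pi_ne_zero]
    have hre : ((z - n) * (2 * (Real.pi : ℂ) + (b : ℂ) + (ε : ℂ))).re
        = (z.re - n) * (2 * Real.pi + b + ε) := by
      simp [Complex.mul_re, Complex.sub_re, Complex.add_re, Complex.sub_im, Complex.add_im,
        Complex.mul_im]
    have hexp : ‖Complex.exp ((z - n) * (2 * (Real.pi : ℂ) + (b : ℂ) + (ε : ℂ)))‖
        = Real.exp ((z.re - n) * (2 * Real.pi + b + ε)) := by
      rw [Complex.norm_exp, hre]
    have hsin : ‖Complex.sin (2 * (Real.pi : ℂ) * (z - n)) / (2 * (Real.pi : ℂ) * (z - n))‖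
        ≤ Real.exp (2 * Real.pi * ‖z - (n : ℂ)‖) := by
      have := norm_sin_div_le _ hu
      have hnu : ‖(2 * (Real.pi : ℂ)) * (z - n)‖ = 2 * Real.pi * ‖z - (n : ℂ)‖ := by
        rw [norm_mul]
        congr 1
        rw [show (2 * (Real.pi : ℂ)) = ((2 * Real.pi : ℝ) : ℂ) by push_cast; ring]
        rw [Complex.norm_real, Real.norm_of_nonneg (by positivity)]
      rwa [hnu] at this
    have hzre : z.re ≤ ‖z‖ := Complex.re_le_norm z
    have hzn : ‖z - (n : ℂ)‖ ≤ ρ + n := by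
      calc ‖z - (n : ℂ)‖ ≤ ‖z‖ + ‖(n : ℂ)‖ := norm_sub_le _ _
        _ ≤ ρ + n := by
            have : ‖(n : ℂ)‖ = (n : ℝ) := by simp
            rw [this]; linarith
    calc ‖_ * _ / _‖ = ‖Complex.exp ((z - n) * (2 * (Real.pi : ℂ) + (b : ℂ) + (ε : ℂ)))‖ *
          ‖Complex.sin (2 * (Real.pi : ℂ) * (z - n)) / (2 * (Real.pi : ℂ) * (z - n))‖ := by
          rw [mul_div_assoc, norm_mul]
      _ ≤ Real.exp ((z.re - n) * (2 * Real.pi + b + ε)) *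
          Real.exp (2 * Real.pi * ‖z - (n : ℂ)‖) := by
          rw [hexp]
          exact mul_le_mul_of_nonneg_left hsin (Real.exp_nonneg _)
      _ = Real.exp ((z.re - n) * (2 * Real.pi + b + ε) + 2 * Real.pi * ‖z - (n : ℂ)‖) :=
          (Real.exp_add _ _).symm
      _ ≤ Real.exp (ρ * (4 * Real.pi + b + ε) - (b + ε) * n) := by
          apply Real.exp_le_exp.mpr
          have h1 : z.re < ρ := lt_of_le_of_lt hzre hz
          nlinarith [hzn, h1, (norm_nonneg (z - (n : ℂ)))]

lemma summable_pi_prod : ∀ (k : ℕ) (g : Fin k → ℕ → ℝ), (∀ i n, 0 ≤ g i n) →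
    (∀ i, Summable (g i)) → Summable (fun n : Fin k → ℕ => ∏ i, g i (n i)) := by
  intro k
  induction k with
  | zero =>
    intro g _ _
    exact .of_finite
  | succ k ih =>
    intro g hg hsum
    have h := (hsum 0).mul_of_nonneg
      (ih (fun i => g i.succ) (fun i n => hg _ _) (fun i => hsum _))
      (hg 0) (fun n => Finset.prod_nonneg fun i _ => hg _ _)
    have := (Fin.consEquiv fun _ : Fin (k + 1) => ℕ).symm.summable_iff.mpr h
    refine (summable_congr ?_).mp this
    intro n
    simp only [Function.comp, Fin.consEquiv_symm_apply]
    rw [Fin.prod_univ_succ]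
    rfl

theorem multi_series_uniform (k : ℕ) (hk : 1 ≤ k) (a : ℝ) (b ε : Fin k → ℝ)
    (hb : ∀ i, 0 < b i) (hε : ∀ i, 0 < ε i)
    (ζ : (Fin k → ℕ) → ℂ)
    (hζ : ∀ n : Fin k → ℕ, ‖ζ n‖ < Real.exp (a + ∑ i, b i * n i))
    (ρ : ℝ) (hρ : 0 < ρ) :
    TendstoUniformlyOn
      (fun (N : Finset (Fin k → ℕ)) (z : Fin k → ℂ) =>
        ∑ n ∈ N, ζ n * ∏ i, fTerm (b i) (ε i) (n i) (z i))
      (fun z : Fin k → ℂ => ∑' n : Fin k → ℕ, ζ n * ∏ i, fTerm (b i) (ε i) (n i) (z i))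
      Filter.atTop {z : Fin k → ℂ | ∀ i, ‖z i‖ < ρ} ∧
    ∀ (n : Fin k → ℕ) (z : Fin k → ℂ), (∀ i, ‖z i‖ < ρ) →
      ‖ζ n * ∏ i, fTerm (b i) (ε i) (n i) (z i)‖ ≤
        Real.exp (a + ρ * ∑ i, (4 * Real.pi + b i + ε i)) *
          Real.exp (-(∑ i, ε i * n i)) := by
  have hbound : ∀ (n : Fin k → ℕ) (z : Fin k → ℂ), (∀ i, ‖z i‖ < ρ) →
      ‖ζ n * ∏ i, fTerm (b i) (ε i) (n i) (z i)‖ ≤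
        Real.exp (a + ρ * ∑ i, (4 * Real.pi + b i + ε i)) *
          Real.exp (-(∑ i, ε i * n i)) := by
    intro n z hz
    rw [norm_mul]
    have hf : ∀ i : Fin k, ‖fTerm (b i) (ε i) (n i) (z i)‖
        ≤ Real.exp (ρ * (4 * Real.pi + b i + ε i) - (b i + ε i) * n i) :=
      fun i => fTerm_bound (hb i) (hε i) hρ (n i) (z i) (hz i)
    calc ‖ζ n‖ * ‖∏ i, fTerm (b i) (ε i) (n i) (z i)‖
        ≤ Real.exp (a + ∑ i, b i * n i) *
          ∏ i, Real.exp (ρ * (4 * Real.pi + b i + ε i) - (b i + ε i) * n i) := by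
          apply mul_le_mul (le_of_lt (hζ n)) _ (norm_nonneg _) (Real.exp_nonneg _)
          calc ‖∏ i, fTerm (b i) (ε i) (n i) (z i)‖ ≤ ∏ i, ‖fTerm (b i) (ε i) (n i) (z i)‖ :=
                norm_prod_le _ _
            _ ≤ ∏ i, Real.exp (ρ * (4 * Real.pi + b i + ε i) - (b i + ε i) * n i) :=
                Finset.prod_le_prod (fun i _ => norm_nonneg _) (fun i _ => hf i)
      _ = Real.exp (a + ρ * ∑ i, (4 * Real.pi + b i + ε i)) * Real.exp (-(∑ i, ε i * n i)) := by
          rw [← Real.exp_sum, ← Real.exp_add, ← Real.exp_add]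
          congr 1
          rw [Finset.sum_sub_distrib, ← Finset.mul_sum]
          have : ∑ i, (b i + ε i) * (n i : ℝ) = ∑ i, b i * n i + ∑ i, ε i * n i := by
            rw [← Finset.sum_add_distrib]
            exact Finset.sum_congr rfl fun i _ => by ring
          rw [this]; ring
  refine ⟨?_, hbound⟩
  apply tendstoUniformlyOn_tsum (u := fun n : Fin k → ℕ =>
    Real.exp (a + ρ * ∑ i, (4 * Real.pi + b i + ε i)) * Real.exp (-(∑ i, ε i * n i)))
  · apply Summable.mul_left
    have : (fun n : Fin k → ℕ => Real.exp (-(∑ i, ε i * n i)))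
        = fun n : Fin k → ℕ => ∏ i, Real.exp (-(ε i * n i)) := by
      funext n
      rw [← Real.exp_sum, ← Finset.sum_neg_distrib]
    rw [this]
    apply summable_pi_prod k (fun i m => Real.exp (-(ε i * m)))
      (fun i m => Real.exp_nonneg _)
    intro i
    have : (fun m : ℕ => Real.exp (-(ε i * m))) = fun m : ℕ => Real.exp (m * (-(ε i))) := by
      funext m; congr 1; ring
    rw [this]
    exact Real.summable_exp_nat_mul_iff.mpr (neg_neg_iff_pos.mpr (hε i))
  · exact fun n z hz => hbound n z hz
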